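/- Let T be a graph, b an integer and α a layout of T of bandwidth at most b. Let ê = (u,v) be an edge of T, and P¹,...,Pᵏ be paths in T, pairwise vertex-disjoint from each other and from {u,v}, each passing through (u,v) with respect to α. Suppose there is a set X of vertices, disjoint from {u,v} and all Pⁱ, with |X| ≥ b − k − 1 and α(X) ⊆ I({u,v}). Then for every i, exactly one vertex of Pⁱ is mapped by α into I({u,v}). -/

import Mathlib

/-- `layoutBandwidthLE G α b` means the layout `α` of `G` has bandwidth at most `b`. -/
def layoutBandwidthLE {V : Type} [Fintype V] (G : SimpleGraph V)
    (α : V ≃ Fin (Fintype.card V)) (b : ℕ) : Prop :=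
  ∀ u v : V, G.Adj u v → |(α u : ℤ) - (α v : ℤ)| ≤ (b : ℤ)

/-- The inclusion interval `I(S) = [min α(S), max α(S)]` of a vertex set `S` under a layout. -/
noncomputable def inclInterval {V : Type} [Fintype V] (α : V ≃ Fin (Fintype.card V))
    (S : Set V) : Set ℕ :=
  Set.Icc (sInf ((fun x => (α x : ℕ)) '' S)) (sSup ((fun x => (α x : ℕ)) '' S))

/-- Crossing lemma: a walk from below `lo` to above `hi` avoiding `[lo,hi]` must have a
jump edge over the interval. -/
lemma cross_lemma {V : Type} [Fintype V] {T : SimpleGraph V}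
    (α : V ≃ Fin (Fintype.card V)) (lo hi : ℕ) (hlohi : lo ≤ hi) :
    ∀ {p q : V} (w : T.Walk p q), (α p : ℕ) < lo → hi < (α q : ℕ) →
      (∀ z ∈ w.support, ¬ (lo ≤ (α z : ℕ) ∧ (α z : ℕ) ≤ hi)) →
      ∃ x y, T.Adj x y ∧ x ∈ w.support ∧ y ∈ w.support ∧
        (α x : ℕ) < lo ∧ hi < (α y : ℕ) := by
  intro p q w
  induction w with
  | nil =>
    intro h1 h2 _
    omega
  | @cons a c d hadj w ih =>
    intro h1 h2 hsupp
    rcases lt_or_ge ((α c : ℕ)) lo with hc | hc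
    · obtain ⟨x, y, hxy, hx, hy, hxlo, hyhi⟩ :=
        ih hc h2 (fun z hz => hsupp z (by simp [SimpleGraph.Walk.support_cons, hz]))
      exact ⟨x, y, hxy, by rw [SimpleGraph.Walk.support_cons]; exact List.mem_cons_of_mem _ hx,
        by rw [SimpleGraph.Walk.support_cons]; exact List.mem_cons_of_mem _ hy, hxlo, hyhi⟩
    · rcases le_or_gt ((α c : ℕ)) hi with hc2 | hc2
      · exact absurd ⟨hc, hc2⟩ (hsupp c
          (by rw [SimpleGraph.Walk.support_cons]; exact List.mem_cons_of_mem _ w.start_mem_support))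
      · exact ⟨a, c, hadj, by rw [SimpleGraph.Walk.support_cons]; exact List.mem_cons_self,
          by rw [SimpleGraph.Walk.support_cons]; exact List.mem_cons_of_mem _ w.start_mem_support,
          h1, hc2⟩

/-- If `k` disjoint paths pass through an edge `uv` in a bandwidth-`b` layout, and a
disjoint vertex set `X` with `|X| ≥ b - k - 1` is mapped into `I({u,v})`, then each
path has exactly one vertex mapped into `I({u,v})`. -/
theorem no_jumping {V : Type} [Fintype V] (T : SimpleGraph V) (b k : ℕ)
    (α : V ≃ Fin (Fintype.card V)) (hα : layoutBandwidthLE T α b)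
    (u v : V) (huv : T.Adj u v)
    (xs ys : Fin k → V) (P : ∀ i, T.Walk (xs i) (ys i)) (hP : ∀ i, (P i).IsPath)
    (hPdisj : ∀ i j, i ≠ j → ∀ w, w ∈ (P i).support → w ∉ (P j).support)
    (hPuv : ∀ i, u ∉ (P i).support ∧ v ∉ (P i).support)
    (hpass : ∀ i, inclInterval α {u, v} ⊆ inclInterval α {w | w ∈ (P i).support})
    (X : Finset V) (hXu : u ∉ X) (hXv : v ∉ X)
    (hXP : ∀ i, ∀ w ∈ X, w ∉ (P i).support)
    (hXcard : (b : ℤ) - (k : ℤ) - 1 ≤ (X.card : ℤ))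
    (hXI : ∀ w ∈ X, (α w : ℕ) ∈ inclInterval α {u, v}) :
    ∀ i, ∃! w : V, w ∈ (P i).support ∧ (α w : ℕ) ∈ inclInterval α {u, v} := by
  classical
  have hNV : Nonempty V := ⟨u⟩
  set lu : ℕ := (α u : ℕ) with hlu
  set lv : ℕ := (α v : ℕ) with hlv
  set lo : ℕ := lu ⊓ lv with hlo
  set hi : ℕ := lu ⊔ lv with hhi
  have hlohi : lo ≤ hi := inf_le_sup
  have hune : u ≠ v := huv.ne
  have hαinj : ∀ a c : V, (α a : ℕ) = (α c : ℕ) → a = c := by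
    intro a c h
    exact α.injective (Fin.val_injective h)
  -- the interval I({u,v})
  have hI : inclInterval α {u, v} = Set.Icc lo hi := by
    unfold inclInterval
    rw [Set.image_pair, csInf_pair, csSup_pair]
  -- bandwidth of the edge uv
  have hd : (hi : ℤ) - (lo : ℤ) ≤ (b : ℤ) := by
    have habs := hα u v huv
    rw [abs_sub_le_iff] at habs
    rcases le_total lu lv with h | h
    · have h1 : lo = lu := inf_eq_left.2 h
      have h2 : hi = lv := sup_eq_right.2 h
      rw [h1, h2]; push_cast; omega
    · have h1 : lo = lv := inf_eq_right.2 h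
      have h2 : hi = lu := sup_eq_left.2 h
      rw [h1, h2]; push_cast; omega
  -- each path has a vertex strictly below lo and strictly above hi
  have hcross : ∀ i, (∃ p ∈ (P i).support, (α p : ℕ) < lo) ∧
      (∃ q ∈ (P i).support, hi < (α q : ℕ)) := by
    intro i
    set img : Set ℕ := (fun x => (α x : ℕ)) '' {w | w ∈ (P i).support} with himg
    have hne : img.Nonempty := ⟨(α (xs i) : ℕ), ⟨xs i, (P i).start_mem_support, rfl⟩⟩
    have hfin : img.Finite := Set.toFinite _
    have hsub := hpass i
    rw [hI] at hsub
    have hlomem := hsub (Set.mem_Icc.2 ⟨le_refl lo, hlohi⟩)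
    have hhimem := hsub (Set.mem_Icc.2 ⟨hlohi, le_refl hi⟩)
    simp only [inclInterval, Set.mem_Icc] at hlomem hhimem
    have hnotuv : ∀ w ∈ (P i).support, (α w : ℕ) ≠ lu ∧ (α w : ℕ) ≠ lv := by
      intro w hw
      constructor
      · intro h; exact (hPuv i).1 (hαinj w u h ▸ hw)
      · intro h; exact (hPuv i).2 (hαinj w v h ▸ hw)
    constructor
    · obtain ⟨p, hp, hpv⟩ := Nat.sInf_mem hne
      refine ⟨p, hp, ?_⟩
      have h1 : (α p : ℕ) ≤ lo := hpv.le.trans hlomem.1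
      have h2 := hnotuv p hp
      rcases le_total lu lv with h | h
      · have : lo = lu := inf_eq_left.2 h
        omega
      · have : lo = lv := inf_eq_right.2 h
        omega
    · obtain ⟨q, hq, hqv⟩ := Set.Nonempty.csSup_mem hne hfin
      refine ⟨q, hq, ?_⟩
      have h1 : hi ≤ (α q : ℕ) := hhimem.2.trans hqv.ge
      have h2 := hnotuv q hq
      rcases le_total lu lv with h | h
      · have : hi = lv := sup_eq_right.2 h
        omega
      · have : hi = lu := sup_eq_left.2 h
        omega
  -- Q i : vertices of P i landing in [lo, hi]
  set Q : Fin k → Finset V :=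
    fun i => (P i).support.toFinset.filter (fun w => (α w : ℕ) ∈ Finset.Icc lo hi) with hQ
  have hQmem : ∀ i w, w ∈ Q i ↔ w ∈ (P i).support ∧ lo ≤ (α w : ℕ) ∧ (α w : ℕ) ≤ hi := by
    intro i w
    simp [hQ, Finset.mem_filter, List.mem_toFinset, Finset.mem_Icc]
  -- missing paths jump
  have hjump : ∀ i, Q i = ∅ → ∃ x y, T.Adj x y ∧ x ∈ (P i).support ∧ y ∈ (P i).support ∧
      (α x : ℕ) < lo ∧ hi < (α y : ℕ) := by
    intro i hQi
    obtain ⟨⟨p, hp, hplo⟩, ⟨q, hq, hqhi⟩⟩ := hcross i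
    set W : T.Walk p q := ((P i).takeUntil p hp).reverse.append ((P i).takeUntil q hq) with hW
    have hWsub : ∀ z ∈ W.support, z ∈ (P i).support := by
      intro z hz
      rw [hW, SimpleGraph.Walk.support_append] at hz
      rcases List.mem_append.1 hz with h | h
      · rw [SimpleGraph.Walk.support_reverse, List.mem_reverse] at h
        exact SimpleGraph.Walk.support_takeUntil_subset _ hp h
      · exact SimpleGraph.Walk.support_takeUntil_subset _ hq (List.mem_of_mem_tail h)
    have hnoI : ∀ z ∈ W.support, ¬ (lo ≤ (α z : ℕ) ∧ (α z : ℕ) ≤ hi) := by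
      intro z hz hmem
      have : z ∈ Q i := (hQmem i z).2 ⟨hWsub z hz, hmem⟩
      rw [hQi] at this
      exact absurd this (Finset.notMem_empty z)
    obtain ⟨x, y, hxy, hx, hy, hxlo, hyhi⟩ := cross_lemma α lo hi hlohi W hplo hqhi hnoI
    exact ⟨x, y, hxy, hWsub x hx, hWsub y hy, hxlo, hyhi⟩
  -- main counting: 2 + |X| + ∑ |Q i| ≤ hi - lo + 1
  set B : Finset V := Finset.univ.biUnion Q with hB
  have hBcard : B.card = ∑ i, (Q i).card := by
    apply Finset.card_biUnion
    intro i _ j _ hij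
    rw [Function.onFun, Finset.disjoint_left]
    intro w hwi hwj
    exact hPdisj i j hij w ((hQmem i w).1 hwi).1 ((hQmem j w).1 hwj).1
  have hcount : 2 + X.card + ∑ i, (Q i).card ≤ hi + 1 - lo := by
    have hdisj1 : Disjoint X B := by
      rw [Finset.disjoint_left]
      intro w hwX hwB
      obtain ⟨i, _, hwi⟩ := Finset.mem_biUnion.1 hwB
      exact hXP i w hwX ((hQmem i w).1 hwi).1
    have hdisj2 : Disjoint ({u, v} : Finset V) (X ∪ B) := by
      rw [Finset.disjoint_left]
      intro w hw hw2
      rcases Finset.mem_union.1 hw2 with h | h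
      · rcases Finset.mem_insert.1 hw with rfl | hw
        · exact hXu h
        · rw [Finset.mem_singleton] at hw; subst hw; exact hXv h
      · obtain ⟨i, _, hwi⟩ := Finset.mem_biUnion.1 h
        rcases Finset.mem_insert.1 hw with rfl | hw
        · exact (hPuv i).1 ((hQmem i w).1 hwi).1
        · rw [Finset.mem_singleton] at hw; subst hw
          exact (hPuv i).2 ((hQmem i w).1 hwi).1
    have hcard : (({u, v} : Finset V) ∪ (X ∪ B)).card = 2 + X.card + B.card := by
      rw [Finset.card_union_of_disjoint hdisj2, Finset.card_union_of_disjoint hdisj1]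
      have : ({u, v} : Finset V).card = 2 := by
        rw [Finset.card_insert_of_notMem (by simp [hune]), Finset.card_singleton]
      omega
    have hle : (({u, v} : Finset V) ∪ (X ∪ B)).card ≤ (Finset.Icc lo hi).card := by
      apply Finset.card_le_card_of_injOn (fun w => (α w : ℕ))
      · intro w hw
        rw [Finset.coe_Icc, Set.mem_Icc]; rw [Finset.mem_coe] at hw
        rcases Finset.mem_union.1 hw with h | h
        · rcases Finset.mem_insert.1 h with rfl | h
          · exact ⟨inf_le_left, le_sup_left⟩
          · rw [Finset.mem_singleton] at h; subst h
            exact ⟨inf_le_right, le_sup_right⟩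
        · rcases Finset.mem_union.1 h with h | h
          · have := hXI w h
            rw [hI, Set.mem_Icc] at this
            exact this
          · obtain ⟨i, _, hwi⟩ := Finset.mem_biUnion.1 h
            exact ((hQmem i w).1 hwi).2
      · intro a _ c _ h
        exact hαinj a c h
    rw [hcard, hBcard] at hle
    rw [Nat.card_Icc] at hle
    exact hle
  -- M : set of missing paths
  set M : Finset (Fin k) := Finset.univ.filter (fun i => Q i = ∅) with hM
  have hsumge : k - M.card ≤ ∑ i, (Q i).card := by
    have h1 : (Finset.univ \ M).card ≤ ∑ i ∈ Finset.univ \ M, (Q i).card := by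
      rw [Finset.card_eq_sum_ones]
      apply Finset.sum_le_sum
      intro i him
      rw [Finset.mem_sdiff, hM, Finset.mem_filter] at him
      have : Q i ≠ ∅ := fun h => him.2 ⟨Finset.mem_univ i, h⟩
      exact Finset.card_pos.2 (Finset.nonempty_iff_ne_empty.2 this)
    have h2 : ∑ i ∈ Finset.univ \ M, (Q i).card ≤ ∑ i, (Q i).card :=
      Finset.sum_le_sum_of_subset (Finset.sdiff_subset)
    have h3 : (Finset.univ \ M).card = k - M.card := by
      rw [Finset.card_sdiff_of_subset (Finset.subset_univ M)]
      simp
    omega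
  -- no path misses
  have hMempty : M = ∅ := by
    by_contra hMne
    obtain ⟨i0, hi0⟩ := Finset.nonempty_iff_ne_empty.2 hMne
    have hjumpM : ∀ i ∈ M, ∃ x y, T.Adj x y ∧ x ∈ (P i).support ∧ y ∈ (P i).support ∧
        (α x : ℕ) < lo ∧ hi < (α y : ℕ) := by
      intro i hi
      rw [hM, Finset.mem_filter] at hi
      exact hjump i hi.2
    choose! fx fy hadj hfx hfy hfxlo hfyhi using hjumpM
    -- each jump has gap ≥ hi - lo + 2, so b ≥ hi - lo + 2
    have hb2 : (hi : ℤ) - lo + 2 ≤ (b : ℤ) := by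
      have h1 := hα (fx i0) (fy i0) (hadj i0 hi0)
      rw [abs_sub_le_iff] at h1
      have h2 := hfxlo i0 hi0
      have h3 := hfyhi i0 hi0
      have h4 : ((α (fx i0) : ℕ) : ℤ) < (lo : ℤ) := by exact_mod_cast h2
      have h5 : (hi : ℤ) < ((α (fy i0) : ℕ) : ℤ) := by exact_mod_cast h3
      omega
    -- left jump endpoints live in a window of b - (hi-lo) - 1 integers
    have hMcard : M.card ≤ (Finset.Icc ((hi : ℤ) + 1 - b) ((lo : ℤ) - 1)).card := by
      apply Finset.card_le_card_of_injOn (fun i => ((α (fx i) : ℕ) : ℤ))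
      · intro i him
        simp only [Finset.coe_Icc, Set.mem_Icc, Finset.mem_coe] at him ⊢
        have h1 := hα (fx i) (fy i) (hadj i him)
        rw [abs_sub_le_iff] at h1
        have h2 : ((α (fx i) : ℕ) : ℤ) < (lo : ℤ) := by exact_mod_cast hfxlo i him
        have h3 : (hi : ℤ) < ((α (fy i) : ℕ) : ℤ) := by exact_mod_cast hfyhi i him
        omega
      · intro i him j hjm h
        by_contra hij
        have h' : ((α (fx i) : ℕ) : ℤ) = ((α (fx j) : ℕ) : ℤ) := h
        have hxeq : fx i = fx j := hαinj _ _ (by exact_mod_cast h')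
        exact hPdisj i j hij (fx i) (hfx i him) (hxeq ▸ hfx j hjm)
    rw [Int.card_Icc] at hMcard
    have hMZ : (M.card : ℤ) ≤ (lo : ℤ) - 1 + 1 - ((hi : ℤ) + 1 - b) := by
      have h0 : (0:ℤ) ≤ (lo : ℤ) - 1 + 1 - ((hi : ℤ) + 1 - b) := by omega
      omega
    -- combine with the counting
    have hcZ : (2 : ℤ) + X.card + ∑ i, ((Q i).card : ℤ) ≤ (hi : ℤ) + 1 - lo := by
      have := hcount
      have hcast : ((∑ i, (Q i).card : ℕ) : ℤ) = ∑ i, ((Q i).card : ℤ) := by push_cast; rfl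
      omega
    have hsZ : (k : ℤ) - M.card ≤ ∑ i, ((Q i).card : ℤ) := by
      have := hsumge
      have hcast : ((∑ i, (Q i).card : ℕ) : ℤ) = ∑ i, ((Q i).card : ℤ) := by push_cast; rfl
      have hMk : M.card ≤ k := by
        have := Finset.card_le_card (Finset.subset_univ M)
        simpa using this
      omega
    omega
  -- now every Q i is nonempty, and sum ≤ k forces each card = 1
  have hone : ∀ i, (Q i).card = 1 := by
    have hge1 : ∀ i, 1 ≤ (Q i).card := by
      intro i
      have : Q i ≠ ∅ := by
        intro h
        have : i ∈ M := by rw [hM, Finset.mem_filter]; exact ⟨Finset.mem_univ i, h⟩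
        rw [hMempty] at this
        exact absurd this (Finset.notMem_empty i)
      exact Finset.card_pos.2 (Finset.nonempty_iff_ne_empty.2 this)
    have hsumle : ∑ i, (Q i).card ≤ k := by
      have hcZ : (2 : ℤ) + X.card + ((∑ i, (Q i).card : ℕ) : ℤ) ≤ (hi : ℤ) + 1 - lo := by
        have := hcount
        omega
      have : ((∑ i, (Q i).card : ℕ) : ℤ) ≤ (k : ℤ) := by omega
      exact_mod_cast this
    by_contra hcon
    push_neg at hcon
    obtain ⟨i, hi⟩ := hcon
    have h2 : 1 < (Q i).card := lt_of_le_of_ne (hge1 i) (Ne.symm hi)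
    have hlt : ∑ _i : Fin k, 1 < ∑ i, (Q i).card :=
      Finset.sum_lt_sum (fun j _ => hge1 j) ⟨i, Finset.mem_univ i, h2⟩
    rw [Finset.sum_const, Finset.card_univ, Fintype.card_fin, smul_eq_mul, mul_one] at hlt
    omega
  -- conclude
  intro i
  obtain ⟨w, hw⟩ := Finset.card_eq_one.1 (hone i)
  refine ⟨w, ?_, ?_⟩
  · have : w ∈ Q i := by rw [hw]; exact Finset.mem_singleton_self w
    obtain ⟨h1, h2, h3⟩ := (hQmem i w).1 this
    exact ⟨h1, by rw [hI, Set.mem_Icc]; exact ⟨h2, h3⟩⟩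
  · intro w' hw'
    have : w' ∈ Q i := by
      rw [hI, Set.mem_Icc] at hw'
      exact (hQmem i w').2 ⟨hw'.1, hw'.2⟩
    rw [hw, Finset.mem_singleton] at this
    exact this
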